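/- Let K be a proper, relatively closed, nonempty subset of the open unit disc Δ ⊂ ℂ such that K is compact as a subset of ℂ. Then there exist a point z₀ ∈ K and a polynomial f ∈ ℂ[z] such that f(z₀) = 1 and |f(z)| < 1 for all z ∈ K with z ≠ z₀. -/

import Mathlib

open Set Metric Polynomial

lemma abs_one_add_lt_two (w : ℂ) (hw : ‖w‖ ≤ 1) (hne : w ≠ 1) :
    ‖1 + w‖ < 2 := by
  by_contra h
  push_neg at h
  have h1 : ‖1 + w‖ ≤ 2 := by
    calc ‖1 + w‖ ≤ ‖(1 : ℂ)‖ + ‖w‖ := norm_add_le _ _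
    _ ≤ 2 := by simp; linarith
  have heq : ‖1 + w‖ = 2 := le_antisymm h1 h
  have hsq : Complex.normSq (1 + w) = 4 := by
    have := congrArg (· ^ 2) heq
    rw [← Complex.sq_norm, heq]; norm_num
  have hre : w.re ≤ 1 := by
    have := Complex.abs_re_le_norm w
    have := abs_le.mp (this.trans hw) |>.2
    linarith [abs_le.mp ((Complex.abs_re_le_norm w).trans hw)]
  have hnsq : Complex.normSq w ≤ 1 := by
    have := Complex.sq_norm w
    nlinarith [norm_nonneg w]
  have hexp : Complex.normSq (1 + w) = 1 + 2 * w.re + Complex.normSq w := by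
    simp [Complex.normSq_apply, Complex.add_re, Complex.add_im]; ring
  have hre1 : w.re = 1 := by nlinarith
  have hnsq1 : Complex.normSq w = 1 := by nlinarith
  have him : w.im = 0 := by
    have : w.re ^ 2 + w.im ^ 2 = 1 := by
      rw [Complex.normSq_apply] at hnsq1; nlinarith
    nlinarith
  exact hne (Complex.ext (by simp [hre1]) (by simp [him]))

/-- A nonempty compact proper relatively closed subset `K` of the open unit disc admits a
polynomial peak point: a point `z₀ ∈ K` and a polynomial `f` with `f z₀ = 1` and `|f| < 1`
on `K \ {z₀}`. -/
theorem exists_polynomial_peak_point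
    (K : Set ℂ) (hKsub : K ⊆ ball (0 : ℂ) 1) (hKne : K.Nonempty)
    (hKproper : K ≠ ball (0 : ℂ) 1)
    (hKclosed : IsClosed ((fun z : (ball (0 : ℂ) 1) => (z : ℂ)) ⁻¹' K))
    (hKcpt : IsCompact K) :
    ∃ z₀ ∈ K, ∃ f : Polynomial ℂ, f.eval z₀ = 1 ∧
      ∀ z ∈ K, z ≠ z₀ → ‖f.eval z‖ < 1 := by
  -- z₀ maximizes |z - 2| over K
  obtain ⟨z₀, hz₀K, hmax⟩ := hKcpt.exists_isMaxOn hKne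
    (continuous_norm.comp (continuous_id.sub continuous_const)).continuousOn
    (f := fun z => ‖z - 2‖)
  have hz₀ne : z₀ - 2 ≠ 0 := by
    have : ‖z₀‖ < 1 := by simpa using hKsub hz₀K
    intro h
    have h2 : z₀ = 2 := by linear_combination h
    rw [h2] at this
    rw [Complex.norm_two] at this
    linarith
  refine ⟨z₀, hz₀K, C (1/2) + C (1/(2*(z₀ - 2))) * (X - C 2), ?_, ?_⟩
  · simp only [eval_add, eval_mul, eval_sub, eval_C, eval_X]
    field_simp
    ring
  · intro z hzK hzne
    simp only [eval_add, eval_mul, eval_sub, eval_C, eval_X]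
    set w : ℂ := (z - 2) / (z₀ - 2) with hw
    have habsw : ‖w‖ ≤ 1 := by
      rw [hw, norm_div, div_le_one (norm_pos_iff.mpr hz₀ne)]
      exact hmax hzK
    have hwne : w ≠ 1 := by
      intro h
      apply hzne
      rw [hw, div_eq_one_iff_eq hz₀ne] at h
      linear_combination h
    have key := abs_one_add_lt_two w habsw hwne
    have : 1/2 + 1/(2*(z₀-2)) * (z - 2) = (1 + w) / 2 := by
      rw [hw]; field_simp
    rw [this, norm_div]
    simp [Complex.norm_two]
    linarith
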